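/- For every real y > 0 and every real x > 0, one has (1/2π)·∫_{−∞}^{∞} x^{−(2+it)}·exp((2+it)²·y) dt = (1/(2√(πy)))·exp(−(log x)²/(4y)). Equivalently, the contour integral (1/2πi)·∫_{2−i∞}^{2+i∞} x^{−s}·e^{s²y} ds equals (1/(2√(πy)))·e^{−(log x)²/(4y)}. -/

import Mathlib

open MeasureTheory Complex

/-- Gaussian contour integral: for `y > 0` and `x > 0`,
`(1/2π)·∫_{−∞}^{∞} x^{−(2+it)}·exp((2+it)²y) dt = (1/(2√(πy)))·exp(−(log x)²/(4y))`,
i.e. `(1/2πi)·∫_{(2)} x^{−s} e^{s²y} ds = (1/(2√(πy)))·e^{−(log x)²/(4y)}`. -/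
theorem stmt_17 (y x : ℝ) (hy : 0 < y) (hx : 0 < x) :
    (1 / (2 * (Real.pi : ℂ))) *
        ∫ t : ℝ, (x : ℂ) ^ (-(2 + (t : ℂ) * I)) * Complex.exp ((2 + (t : ℂ) * I) ^ 2 * (y : ℂ)) =
      ((1 / (2 * Real.sqrt (Real.pi * y)) *
          Real.exp (-(Real.log x) ^ 2 / (4 * y)) : ℝ) : ℂ) := by
  set L : ℝ := Real.log x with hL
  have hx0 : (x : ℂ) ≠ 0 := by exact_mod_cast hx.ne'
  have hlog : Complex.log (x : ℂ) = (L : ℂ) := by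
    rw [hL, Complex.ofReal_log hx.le]
  have key : ∀ t : ℝ,
      (x : ℂ) ^ (-(2 + (t : ℂ) * I)) * Complex.exp ((2 + (t : ℂ) * I) ^ 2 * (y : ℂ)) =
      Complex.exp ((-(y : ℂ)) * (t : ℂ) ^ 2 + (I * (4 * y - L)) * t + (4 * y - 2 * L)) := by
    intro t
    rw [Complex.cpow_def_of_ne_zero hx0, hlog, ← Complex.exp_add]
    congr 1
    have : I * I = -1 := Complex.I_mul_I
    ring_nf
    rw [Complex.I_sq]
    ring
  rw [integral_congr_ae (Filter.Eventually.of_forall key),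
    integral_cexp_quadratic (by simpa using hy : (-(y:ℂ)).re < 0)]
  have hexp : (4 * (y:ℂ) - 2 * L) - (I * (4 * y - L)) ^ 2 / (4 * (-(y:ℂ))) =
      ((-L ^ 2 / (4 * y) : ℝ) : ℂ) := by
    have hy0 : (y : ℂ) ≠ 0 := by exact_mod_cast hy.ne'
    rw [mul_pow, Complex.I_sq]
    push_cast
    field_simp
    ring
  rw [hexp]
  have hpow : ((Real.pi : ℂ) / -(-(y:ℂ))) ^ (1 / 2 : ℂ) = (Real.sqrt (Real.pi / y) : ℂ) := by
    rw [neg_neg]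
    have : (Real.pi : ℂ) / (y : ℂ) = ((Real.pi / y : ℝ) : ℂ) := by push_cast; ring
    rw [this, show (1 / 2 : ℂ) = ((1 / 2 : ℝ) : ℂ) by push_cast; ring,
      ← Complex.ofReal_cpow (div_nonneg Real.pi_pos.le hy.le),
      Real.sqrt_eq_rpow]
  rw [hpow]
  have hsqrt : Real.sqrt (Real.pi / y) = Real.pi / Real.sqrt (Real.pi * y) := by
    have h1 : Real.sqrt (Real.pi / y) * Real.sqrt (Real.pi * y) = Real.pi := by
      rw [← Real.sqrt_mul (div_nonneg Real.pi_pos.le hy.le)]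
      rw [show Real.pi / y * (Real.pi * y) = Real.pi ^ 2 by field_simp]
      exact Real.sqrt_sq Real.pi_pos.le
    have h2 : Real.sqrt (Real.pi * y) ≠ 0 :=
      Real.sqrt_ne_zero'.mpr (mul_pos Real.pi_pos hy)
    rw [eq_div_iff h2]
    exact h1
  rw [← Complex.ofReal_exp]
  have hconst : (1 / (2 * Real.pi)) * Real.sqrt (Real.pi / y) =
      1 / (2 * Real.sqrt (Real.pi * y)) := by
    rw [hsqrt]
    have h2 : Real.sqrt (Real.pi * y) ≠ 0 :=
      Real.sqrt_ne_zero'.mpr (mul_pos Real.pi_pos hy)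
    field_simp
  calc (1 / (2 * (Real.pi : ℂ))) * ((Real.sqrt (Real.pi / y) : ℂ) *
        ((Real.exp (-L ^ 2 / (4 * y)) : ℝ) : ℂ))
      = (((1 / (2 * Real.pi)) * Real.sqrt (Real.pi / y) : ℝ) : ℂ) *
        ((Real.exp (-L ^ 2 / (4 * y)) : ℝ) : ℂ) := by push_cast; ring
    _ = _ := by rw [hconst]; push_cast; ring
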